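/- arXiv:2511.09565 — 7 statements merged into one kernel-verified Lean document; each statement's English description precedes it below -/
import Mathlib

section
/- Let m be a positive integer and let ζ be a primitive m-th root of unity in ℂ. Let a, b be nonzero complex numbers with |ab| < 1. Then f(ζa, ζb) = ∑_{k=0}^{m-1} ζ^{k²} · a^{k(k+1)/2} · b^{k(k-1)/2} · f(A_m·(ab)^{mk}, B_m·(ab)^{-mk}), where A_m = a^{m(m+1)/2}·b^{m(m-1)/2} and B_m = a^{m(m-1)/2}·b^{m(m+1)/2}, and the negative powers (ab)^{-mk} are interpreted as integer powers of the nonzero complex number ab. -/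
/-- Ramanujan's theta function `f(a,b) = ∑_{n ∈ ℤ} a^(n(n+1)/2) * b^(n(n-1)/2)`. -/
noncomputable def ramanujanTheta (a b : ℂ) : ℂ :=
  ∑' n : ℤ, a ^ (n * (n + 1) / 2) * b ^ (n * (n - 1) / 2)

namespace ThetaAux

open Filter

noncomputable def term (a b : ℂ) (n : ℤ) : ℂ :=
  a ^ (n * (n + 1) / 2) * b ^ (n * (n - 1) / 2)

lemma theta_eq (a b : ℂ) : ramanujanTheta a b = ∑' n : ℤ, term a b n := rfl

lemma half (n : ℤ) : ∃ c, n * (n + 1) = 2 * c ∧ n * (n + 1) / 2 = c := by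
  obtain ⟨c, hc⟩ := Int.even_mul_succ_self n
  rw [hc]
  exact ⟨c, by ring, by omega⟩

lemma halfS (n : ℤ) : ∃ c, n * (n - 1) = 2 * c ∧ n * (n - 1) / 2 = c := by
  obtain ⟨c, h1, h2⟩ := half (n - 1)
  have e : n * (n - 1) = (n - 1) * ((n - 1) + 1) := by ring
  exact ⟨c, by rw [e]; exact h1, by rw [e]; exact h2⟩

lemma TS (n : ℤ) : n * (n + 1) / 2 + n * (n - 1) / 2 = n * n := by
  obtain ⟨c, h1, h2⟩ := half n
  obtain ⟨d, h1', h2'⟩ := halfS n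
  rw [h2, h2']
  have h4 : 2 * c + 2 * d = 2 * (n * n) := by linear_combination -h1 - h1'
  linarith

lemma expA (M K q : ℤ) :
    (q * M + K) * ((q * M + K) + 1) / 2 =
      K * (K + 1) / 2 + (M * (M + 1) / 2) * (q * (q + 1) / 2)
        + (M * (M - 1) / 2) * (q * (q - 1) / 2)
        + (M * K) * (q * (q + 1) / 2) + (-(M * K)) * (q * (q - 1) / 2) := by
  obtain ⟨cN, hN, hN2⟩ := half (q * M + K)
  obtain ⟨cK, hK, hK2⟩ := half K
  obtain ⟨cM, hM, hM2⟩ := half M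
  obtain ⟨cQ, hQ, hQ2⟩ := half q
  obtain ⟨cM', hM', hM2'⟩ := halfS M
  obtain ⟨cQ', hQ', hQ2'⟩ := halfS q
  rw [hN2, hK2, hM2, hQ2, hM2', hQ2']
  have h4 : 4 * cN = 4 * cK + 4 * (cM * cQ) + 4 * (cM' * cQ')
      + 4 * ((M * K) * cQ) - 4 * ((M * K) * cQ') := by
    linear_combination (-2 : ℤ) * hN + 2 * hK + 2 * cQ * hM + M * (M + 1) * hQ
      + 2 * cQ' * hM' + M * (M - 1) * hQ' + 2 * M * K * hQ - 2 * M * K * hQ'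
  linarith

lemma expB (M K q : ℤ) :
    (q * M + K) * ((q * M + K) - 1) / 2 =
      K * (K - 1) / 2 + (M * (M - 1) / 2) * (q * (q + 1) / 2)
        + (M * (M + 1) / 2) * (q * (q - 1) / 2)
        + (M * K) * (q * (q + 1) / 2) + (-(M * K)) * (q * (q - 1) / 2) := by
  obtain ⟨cN, hN, hN2⟩ := halfS (q * M + K)
  obtain ⟨cK, hK, hK2⟩ := halfS K
  obtain ⟨cM, hM, hM2⟩ := halfS M
  obtain ⟨cQ, hQ, hQ2⟩ := half q
  obtain ⟨cM', hM', hM2'⟩ := half M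
  obtain ⟨cQ', hQ', hQ2'⟩ := halfS q
  rw [hN2, hK2, hM2, hQ2, hM2', hQ2']
  have h4 : 4 * cN = 4 * cK + 4 * (cM * cQ) + 4 * (cM' * cQ')
      + 4 * ((M * K) * cQ) - 4 * ((M * K) * cQ') := by
    linear_combination (-2 : ℤ) * hN + 2 * hK + 2 * cQ * hM + M * (M - 1) * hQ
      + 2 * cQ' * hM' + M * (M + 1) * hQ' + 2 * M * K * hQ - 2 * M * K * hQ'
  linarith

lemma term_succ (a b : ℂ) (ha : a ≠ 0) (hb : b ≠ 0) (n : ℤ) :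
    term a b (n + 1) = term a b n * (a * (a * b) ^ n) := by
  have e1 : (n + 1) * ((n + 1) + 1) / 2 = n * (n + 1) / 2 + (n + 1) := by
    rw [show (n + 1) * ((n + 1) + 1) = n * (n + 1) + (n + 1) * 2 by ring,
      Int.add_mul_ediv_right _ _ two_ne_zero]
  have e2 : (n + 1) * ((n + 1) - 1) / 2 = n * (n - 1) / 2 + n := by
    rw [show (n + 1) * ((n + 1) - 1) = n * (n - 1) + n * 2 by ring,
      Int.add_mul_ediv_right _ _ two_ne_zero]
  rw [term, term, e1, e2, zpow_add₀ ha, zpow_add₀ hb, mul_zpow,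
    zpow_add_one₀ ha]
  ring

lemma term_neg (a b : ℂ) (n : ℤ) : term a b (-n) = term b a n := by
  rw [term, term, show -n * (-n + 1) = n * (n - 1) by ring,
    show -n * (-n - 1) = n * (n + 1) by ring]
  exact mul_comm _ _

lemma summable_nat (a b : ℂ) (ha : a ≠ 0) (hb : b ≠ 0)
    (hab : ‖a * b‖ < 1) : Summable (fun n : ℕ => term a b n) := by
  apply summable_of_ratio_norm_eventually_le (r := 1 / 2) (by norm_num)
  have h0 : Tendsto (fun n : ℕ => ‖a‖ * ‖a * b‖ ^ n)
      atTop (nhds 0) := by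
    rw [show (0 : ℝ) = ‖a‖ * 0 by ring]
    exact (tendsto_pow_atTop_nhds_zero_of_abs_lt_one
      (by rwa [abs_of_nonneg (norm_nonneg _)])).const_mul _
  filter_upwards [h0.eventually_lt_const (by norm_num : (0:ℝ) < 1/2)] with n hn
  have hcast : ((n : ℤ) + 1) = ((n + 1 : ℕ) : ℤ) := by push_cast; ring
  rw [show term a b ((n+1 : ℕ) : ℤ) = term a b ((n : ℤ) + 1) by rw [hcast],
    term_succ a b ha hb n, norm_mul]
  have hnorm : ‖a * (a * b) ^ (n : ℤ)‖ = ‖a‖ * ‖a * b‖ ^ n := by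
    rw [norm_mul, norm_zpow, zpow_natCast]
  rw [hnorm]
  nlinarith [norm_nonneg (term a b (n : ℤ)), hn.le,
    mul_nonneg (norm_nonneg a) (pow_nonneg (norm_nonneg (a*b)) n)]

lemma summable_term (a b : ℂ) (ha : a ≠ 0) (hb : b ≠ 0)
    (hab : ‖a * b‖ < 1) : Summable (term a b) := by
  apply Summable.of_nat_of_neg (summable_nat a b ha hb hab)
  have h : ∀ n : ℕ, term a b (-(n : ℤ)) = term b a n := fun n => term_neg a b n
  simp only [h]
  exact summable_nat b a hb ha (by rwa [mul_comm])

lemma key (m : ℕ) (hm : 0 < m) (ζ a b : ℂ) (hζm : ζ ^ m = 1) (hζ0 : ζ ≠ 0)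
    (ha : a ≠ 0) (hb : b ≠ 0) (k : ℕ) (q : ℤ) :
    term (ζ * a) (ζ * b) (q * m + k) =
      ζ ^ (k ^ 2) * a ^ (k * (k + 1) / 2) * b ^ (k * (k - 1) / 2) *
        term (a ^ (m * (m + 1) / 2) * b ^ (m * (m - 1) / 2) * (a * b) ^ (m * k))
          (a ^ (m * (m - 1) / 2) * b ^ (m * (m + 1) / 2) * (a * b) ^ (-(m * k : ℤ))) q := by
  set M : ℤ := (m : ℤ) with hM
  set K : ℤ := (k : ℤ) with hK
  set n : ℤ := q * M + K with hn
  have ck1 : ((k * (k + 1) / 2 : ℕ) : ℤ) = K * (K + 1) / 2 := by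
    rw [Int.natCast_ediv]; push_cast; ring_nf; rw [hK]
  have ck2 : ((k * (k - 1) / 2 : ℕ) : ℤ) = K * (K - 1) / 2 := by
    rcases Nat.eq_zero_or_pos k with h | h
    · subst h; simp [hK]
    · rw [Int.natCast_ediv]; push_cast [Nat.cast_sub h]; ring_nf; rw [hK]
  have cm1 : ((m * (m + 1) / 2 : ℕ) : ℤ) = M * (M + 1) / 2 := by
    rw [Int.natCast_ediv]; push_cast; ring_nf; rw [hM]
  have cm2 : ((m * (m - 1) / 2 : ℕ) : ℤ) = M * (M - 1) / 2 := by
    rw [Int.natCast_ediv]; push_cast [Nat.cast_sub hm]; ring_nf; rw [hM]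
  have hz : ζ ^ (n * n) = ζ ^ (k ^ 2) := by
    have e : n * n = (k ^ 2 : ℕ) + M * (M * (q * q) + 2 * (q * K)) := by
      push_cast [hn, hK, hM]; ring
    rw [e, zpow_add₀ hζ0, zpow_natCast, zpow_mul]
    rw [show (ζ : ℂ) ^ M = 1 by rw [hM, zpow_natCast, hζm]]
    simp
  have epa : ∀ t : ℤ, a ^ t = Complex.exp (t * Complex.log a) := fun t => by
    rw [Complex.exp_int_mul, Complex.exp_log ha]
  have epb : ∀ t : ℤ, b ^ t = Complex.exp (t * Complex.log b) := fun t => by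
    rw [Complex.exp_int_mul, Complex.exp_log hb]
  have hab2 : a ^ (n * (n + 1) / 2) * b ^ (n * (n - 1) / 2) =
      a ^ (k * (k + 1) / 2) * b ^ (k * (k - 1) / 2) *
        term (a ^ (m * (m + 1) / 2) * b ^ (m * (m - 1) / 2) * (a * b) ^ (m * k))
          (a ^ (m * (m - 1) / 2) * b ^ (m * (m + 1) / 2) * (a * b) ^ (-(m * k : ℤ))) q := by
    rw [term, ← zpow_natCast a (k * (k + 1) / 2), ← zpow_natCast b (k * (k - 1) / 2),
      ← zpow_natCast a (m * (m + 1) / 2), ← zpow_natCast b (m * (m - 1) / 2),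
      ← zpow_natCast a (m * (m - 1) / 2), ← zpow_natCast b (m * (m + 1) / 2),
      ← zpow_natCast (a * b) (m * k)]
    rw [ck1, ck2, cm1, cm2]
    push_cast
    simp only [mul_zpow, ← zpow_mul]
    simp only [epa, epb, ← Complex.exp_add]
    congr 1
    have hA := congrArg (fun t : ℤ => (t : ℂ) * Complex.log a) (expA M K q)
    have hB := congrArg (fun t : ℤ => (t : ℂ) * Complex.log b) (expB M K q)
    push_cast at hA hB ⊢
    linear_combination hA + hB
  have hTS := TS n
  calc term (ζ * a) (ζ * b) n
      = (ζ ^ (n * (n + 1) / 2) * ζ ^ (n * (n - 1) / 2)) *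
          (a ^ (n * (n + 1) / 2) * b ^ (n * (n - 1) / 2)) := by
        rw [term, mul_zpow, mul_zpow]; ring
    _ = ζ ^ (k ^ 2) * (a ^ (n * (n + 1) / 2) * b ^ (n * (n - 1) / 2)) := by
        rw [← zpow_add₀ hζ0, hTS, hz]
    _ = _ := by rw [hab2]; ring

def zEquiv (m : ℕ) (hm : 0 < m) : Fin m × ℤ ≃ ℤ where
  toFun p := p.2 * m + ((p.1 : ℕ) : ℤ)
  invFun n := (⟨(n % m).toNat, by
      have h1 : 0 ≤ n % (m : ℤ) := Int.emod_nonneg n (by exact_mod_cast hm.ne')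
      have h2 : n % (m : ℤ) < m := Int.emod_lt_of_pos n (by exact_mod_cast hm)
      omega⟩, n / m)
  left_inv := by
    rintro ⟨⟨k, hk⟩, q⟩
    have hmz : (m : ℤ) ≠ 0 := by exact_mod_cast hm.ne'
    have hk' : (k : ℤ) < m := by exact_mod_cast hk
    have e0 : q * (m : ℤ) + k = k + (m : ℤ) * q := by ring
    have e1 : (q * m + k) % (m : ℤ) = k := by
      rw [e0, Int.add_mul_emod_self_left, Int.emod_eq_of_lt (by positivity) hk']
    have e2 : (q * m + k) / (m : ℤ) = q := by
      rw [e0, Int.add_mul_ediv_left _ _ hmz,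
        Int.ediv_eq_zero_of_lt (by positivity) hk', zero_add]
    simp only [Prod.mk.injEq, Fin.mk.injEq]
    exact ⟨by rw [e1]; simp, e2⟩
  right_inv := by
    intro n
    have h1 : 0 ≤ n % (m : ℤ) := Int.emod_nonneg n (by exact_mod_cast hm.ne')
    simp only
    rw [Int.toNat_of_nonneg h1]
    have h := Int.mul_ediv_add_emod n m
    linarith

lemma zEquiv_apply (m : ℕ) (hm : 0 < m) (p : Fin m × ℤ) :
    zEquiv m hm p = p.2 * m + ((p.1 : ℕ) : ℤ) := rfl

end ThetaAux

open ThetaAux in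
theorem theta_root_of_unity_transform (m : ℕ) (hm : 0 < m) (ζ a b : ℂ)
    (hζ : IsPrimitiveRoot ζ m) (ha : a ≠ 0) (hb : b ≠ 0)
    (hab : ‖a * b‖ < 1) :
    ramanujanTheta (ζ * a) (ζ * b) =
      ∑ k ∈ Finset.range m,
        ζ ^ (k ^ 2) * a ^ (k * (k + 1) / 2) * b ^ (k * (k - 1) / 2) *
          ramanujanTheta
            (a ^ (m * (m + 1) / 2) * b ^ (m * (m - 1) / 2) * (a * b) ^ (m * k))
            (a ^ (m * (m - 1) / 2) * b ^ (m * (m + 1) / 2) * (a * b) ^ (-(m * k : ℤ))) := by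
  have hmz : m ≠ 0 := hm.ne'
  have hζm : ζ ^ m = 1 := hζ.pow_eq_one
  have hζ0 : ζ ≠ 0 := by
    intro h; rw [h, zero_pow hmz] at hζm; exact zero_ne_one hζm
  have hζabs : ‖ζ‖ = 1 := by
    have h1 : ‖ζ‖ ^ m = 1 := by rw [← norm_pow, hζm, norm_one]
    rcases lt_trichotomy ‖ζ‖ 1 with hlt | heq | hgt
    · have := pow_lt_one₀ (norm_nonneg ζ) hlt hmz
      simp [h1] at this
    · exact heq
    · have := one_lt_pow₀ hgt hmz
      simp [h1] at this
  have hza : ζ * a ≠ 0 := mul_ne_zero hζ0 ha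
  have hzb : ζ * b ≠ 0 := mul_ne_zero hζ0 hb
  have habz : ‖ζ * a * (ζ * b)‖ < 1 := by
    rw [show ζ * a * (ζ * b) = ζ * ζ * (a * b) by ring, norm_mul, norm_mul, hζabs]
    simpa using hab
  have hS : Summable (term (ζ * a) (ζ * b)) := summable_term _ _ hza hzb habz
  rw [theta_eq, ← (zEquiv m hm).tsum_eq (term (ζ * a) (ζ * b))]
  simp only [zEquiv_apply]
  have hS' : Summable (fun p : Fin m × ℤ =>
      term (ζ * a) (ζ * b) (p.2 * m + ((p.1 : ℕ) : ℤ))) := by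
    exact ((Equiv.summable_iff (zEquiv m hm)).mpr hS).congr
      (fun p => by rw [Function.comp_apply, zEquiv_apply])
  rw [Summable.tsum_prod' hS' (fun k => by
    apply hS.comp_injective (i := fun q : ℤ => q * m + ((k : ℕ) : ℤ))
    intro x y hxy
    simp only at hxy
    have hmz' : (m : ℤ) ≠ 0 := by exact_mod_cast hmz
    have := add_right_cancel hxy
    exact mul_right_cancel₀ hmz' this)]
  rw [tsum_fintype]
  rw [Fin.sum_univ_eq_sum_range
    (fun k => ∑' q : ℤ, term (ζ * a) (ζ * b) (q * m + (k : ℤ))) m]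
  refine Finset.sum_congr rfl fun k hk => ?_
  rw [tsum_congr (fun q => key m hm ζ a b hζm hζ0 ha hb k q), tsum_mul_left, ← theta_eq]
end

section
/- Let m be a positive integer and let a, b be nonzero complex numbers with |ab| < 1. Then f(a, b) admits the m-dissection f(a,b) = ∑_{k=0}^{m-1} a^{k(k+1)/2} · b^{k(k-1)/2} · f(A_m·(ab)^{mk}, B_m·(ab)^{-mk}), where A_m = a^{m(m+1)/2}·b^{m(m-1)/2} and B_m = a^{m(m-1)/2}·b^{m(m+1)/2}. -/
open Complex

lemma castHalfInt (n : ℤ) : ((n * (n + 1) / 2 : ℤ) : ℂ) = ((n:ℂ)^2 + n) / 2 := by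
  have h : n * (n + 1) / 2 * 2 = n * (n + 1) :=
    Int.ediv_mul_cancel (Int.even_mul_succ_self n).two_dvd
  have h2 : ((n * (n + 1) / 2 : ℤ) : ℂ) * 2 = (n:ℂ) * (n + 1) := by exact_mod_cast h
  linear_combination h2 / 2

lemma castHalfInt' (n : ℤ) : ((n * (n - 1) / 2 : ℤ) : ℂ) = ((n:ℂ)^2 - n) / 2 := by
  have h : n * (n - 1) / 2 * 2 = n * (n - 1) := by
    refine Int.ediv_mul_cancel ?_
    have := (Int.even_mul_succ_self (n-1)).two_dvd
    simpa [mul_comm] using this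
  have h2 : ((n * (n - 1) / 2 : ℤ) : ℂ) * 2 = (n:ℂ) * (n - 1) := by exact_mod_cast h
  linear_combination h2 / 2

lemma castHalfNat (k : ℕ) : ((k * (k + 1) / 2 : ℕ) : ℂ) = ((k:ℂ)^2 + k) / 2 := by
  have h : k * (k + 1) / 2 * 2 = k * (k + 1) :=
    Nat.div_mul_cancel (Nat.even_mul_succ_self k).two_dvd
  have h2 : ((k * (k + 1) / 2 : ℕ) : ℂ) * 2 = (k:ℂ) * (k + 1) := by exact_mod_cast h
  linear_combination h2 / 2

lemma castHalfNat' (k : ℕ) : ((k * (k - 1) / 2 : ℕ) : ℂ) = ((k:ℂ)^2 - k) / 2 := by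
  cases k with
  | zero => norm_num
  | succ k =>
    simp only [Nat.add_sub_cancel]
    have h : (k+1) * k / 2 * 2 = (k+1) * k :=
      Nat.div_mul_cancel (by simpa [mul_comm] using (Nat.even_mul_succ_self k).two_dvd)
    have h2 : (((k+1) * k / 2 : ℕ) : ℂ) * 2 = ((k:ℂ)+1) * k := by exact_mod_cast h
    push_cast
    linear_combination h2 / 2

lemma term_eq (m : ℕ) (a b : ℂ) (ha : a ≠ 0) (hb : b ≠ 0) (k : ℕ) (j : ℤ) :
    a ^ ((j * (m:ℤ) + (k:ℤ)) * ((j * (m:ℤ) + (k:ℤ)) + 1) / 2) *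
      b ^ ((j * (m:ℤ) + (k:ℤ)) * ((j * (m:ℤ) + (k:ℤ)) - 1) / 2) =
    a ^ (k * (k + 1) / 2) * b ^ (k * (k - 1) / 2) *
      ((a ^ (m * (m + 1) / 2) * b ^ (m * (m - 1) / 2) * (a * b) ^ (m * k)) ^ (j * (j + 1) / 2) *
       (a ^ (m * (m - 1) / 2) * b ^ (m * (m + 1) / 2) * (a * b) ^ (-(m * k : ℤ))) ^
         (j * (j - 1) / 2)) := by
  rw [show a = Complex.exp (Complex.log a) from (Complex.exp_log ha).symm,
      show b = Complex.exp (Complex.log b) from (Complex.exp_log hb).symm]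
  set la := Complex.log a
  set lb := Complex.log b
  simp only [← Complex.exp_nat_mul, ← Complex.exp_int_mul, ← Complex.exp_add]
  congr 1
  rw [castHalfInt (j * (m:ℤ) + (k:ℤ)), castHalfInt' (j * (m:ℤ) + (k:ℤ)),
      castHalfNat m, castHalfNat' m, castHalfNat k, castHalfNat' k,
      castHalfInt j, castHalfInt' j]
  push_cast
  ring

lemma tsum_int_eq_sum_range (m : ℕ) (hm : 0 < m) (F : ℤ → ℂ) (hsum : Summable F) :
    ∑' n : ℤ, F n = ∑ k ∈ Finset.range m, ∑' j : ℤ, F (j * (m : ℤ) + (k : ℤ)) := by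
  haveI : NeZero m := ⟨hm.ne'⟩
  let e : Fin m × ℤ ≃ ℤ := (Equiv.prodComm (Fin m) ℤ).trans (Int.divModEquiv m).symm
  have hs : Summable (fun p : Fin m × ℤ => F (e p)) := e.summable_iff.mpr hsum
  calc (∑' n : ℤ, F n) = ∑' p : Fin m × ℤ, F (e p) := (e.tsum_eq F).symm
    _ = ∑' (k : Fin m), ∑' (j : ℤ), F (e (k, j)) := hs.tsum_prod
    _ = ∑ k : Fin m, ∑' (j : ℤ), F (e (k, j)) := tsum_fintype _
    _ = ∑ k : Fin m, ∑' (j : ℤ), F (j * (m : ℤ) + ((k : ℕ) : ℤ)) :=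
        Finset.sum_congr rfl fun k _ => tsum_congr fun j => congrArg F rfl
    _ = ∑ k ∈ Finset.range m, ∑' j : ℤ, F (j * (m : ℤ) + (k : ℤ)) :=
        Fin.sum_univ_eq_sum_range (fun k => ∑' j : ℤ, F (j * (m : ℤ) + (k : ℤ))) m

lemma summable_ramanujan (a b : ℂ) (ha : a ≠ 0) (hb : b ≠ 0)
    (hab : ‖a * b‖ < 1) :
    Summable (fun n : ℤ => a ^ (n * (n + 1) / 2) * b ^ (n * (n - 1) / 2)) := by
  set la := Complex.log a
  set lb := Complex.log b
  set z : ℂ := (la - lb) / (4 * Real.pi * I)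
  set τ : ℂ := (-(la + lb) * I) / (2 * Real.pi)
  have hpi : (Real.pi : ℂ) ≠ 0 := by exact_mod_cast Real.pi_ne_zero
  have key : ∀ n : ℤ, a ^ (n * (n + 1) / 2) * b ^ (n * (n - 1) / 2) = jacobiTheta₂_term n z τ := by
    intro n
    rw [jacobiTheta₂_term]
    rw [show a = Complex.exp la from (Complex.exp_log ha).symm,
        show b = Complex.exp lb from (Complex.exp_log hb).symm]
    rw [← Complex.exp_int_mul, ← Complex.exp_int_mul, ← Complex.exp_add]
    congr 1
    rw [castHalfInt, castHalfInt']
    simp only [z, τ]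
    field_simp
    ring_nf
    rw [Complex.I_sq]
    ring
  rw [summable_congr key, summable_jacobiTheta₂_term_iff]
  have him : τ.im = -(la.re + lb.re) / (2 * Real.pi) := by
    simp [τ, Complex.div_im, Complex.mul_im, Complex.mul_re]
    field_simp
  rw [him]
  have hre : la.re + lb.re = Real.log ‖a * b‖ := by
    rw [norm_mul, Real.log_mul (norm_ne_zero_iff.mpr ha) (norm_ne_zero_iff.mpr hb)]
    simp [la, lb, Complex.log_re]
  have : Real.log ‖a * b‖ < 0 :=
    Real.log_neg (norm_pos_iff.mpr (mul_ne_zero ha hb)) hab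
  rw [hre]
  apply div_pos (by linarith) (by positivity)


theorem theta_m_dissection (m : ℕ) (hm : 0 < m) (a b : ℂ)
    (ha : a ≠ 0) (hb : b ≠ 0) (hab : ‖a * b‖ < 1) :
    ramanujanTheta a b =
      ∑ k ∈ Finset.range m,
        a ^ (k * (k + 1) / 2) * b ^ (k * (k - 1) / 2) *
          ramanujanTheta
            (a ^ (m * (m + 1) / 2) * b ^ (m * (m - 1) / 2) * (a * b) ^ (m * k))
            (a ^ (m * (m - 1) / 2) * b ^ (m * (m + 1) / 2) * (a * b) ^ (-(m * k : ℤ))) := by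
  rw [ramanujanTheta, tsum_int_eq_sum_range m hm _ (summable_ramanujan a b ha hb hab)]
  refine Finset.sum_congr rfl fun k _ => ?_
  rw [ramanujanTheta, ← tsum_mul_left]
  exact tsum_congr fun j => term_eq m a b ha hb k j
end

section
/- Let a, b be nonzero complex numbers with |ab| < 1. Then f(a³b, ab³) = (1/2)·[f(a,b) + f(−a,−b)]. -/
open Filter

private lemma int_div2 (n : ℤ) :
    2 * (n * (n + 1) / 2) = n * (n + 1) ∧ 2 * (n * (n - 1) / 2) = n * (n - 1) := by
  obtain ⟨k, hk⟩ := Int.even_mul_succ_self n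
  obtain ⟨l, hl⟩ := Int.even_mul_pred_self n
  omega

private lemma nat_key (n : ℕ) : (n + 1) * n / 2 = n * (n - 1) / 2 + n := by
  have h0 : (n + 1) * n = n * (n - 1) + 2 * n := by
    cases n with
    | zero => simp
    | succ m => simp only [Nat.succ_sub_one]; ring
  obtain ⟨k, hk⟩ := Nat.even_mul_pred_self n
  omega

private lemma nat_cast_pred (n : ℕ) : ((n * (n - 1) : ℕ) : ℤ) = (n : ℤ) * (n : ℤ) - n := by
  cases n with
  | zero => simp
  | succ m => push_cast [Nat.succ_sub_one]; ring

private lemma aux_nat (x c : ℂ) (hx : ‖x‖ < 1) :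
    Summable (fun n : ℕ => x ^ (n * (n - 1) / 2) * c ^ n) := by
  apply summable_of_ratio_norm_eventually_le (r := 1/2) (by norm_num)
  have h0 : Tendsto (fun n : ℕ => ‖x‖ ^ n * ‖c‖) atTop (nhds 0) := by
    simpa using (tendsto_pow_atTop_nhds_zero_of_lt_one (norm_nonneg x) hx).mul_const ‖c‖
  filter_upwards [h0.eventually (ge_mem_nhds (by norm_num : (0:ℝ) < 1/2))] with n hn
  have he : (n + 1) * ((n + 1) - 1) / 2 = n * (n - 1) / 2 + n := by
    simpa using nat_key n
  rw [norm_mul, norm_mul, norm_pow, norm_pow, norm_pow, norm_pow, he, pow_add, pow_succ]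
  have h1 : (0:ℝ) ≤ ‖x‖ ^ (n * (n - 1) / 2) * ‖c‖ ^ n := by positivity
  calc ‖x‖ ^ (n * (n - 1) / 2) * ‖x‖ ^ n * (‖c‖ ^ n * ‖c‖)
      = (‖x‖ ^ n * ‖c‖) * (‖x‖ ^ (n * (n - 1) / 2) * ‖c‖ ^ n) := by ring
    _ ≤ (1/2) * (‖x‖ ^ (n * (n - 1) / 2) * ‖c‖ ^ n) := by
        exact mul_le_mul_of_nonneg_right hn h1

private lemma g_summable (a b : ℂ) (hab : ‖a * b‖ < 1) :
    Summable (fun n : ℤ => a ^ (n * (n + 1) / 2) * b ^ (n * (n - 1) / 2)) := by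
  apply Summable.of_nat_of_neg_add_one
  · apply (aux_nat (a*b) a hab).congr
    intro n
    obtain ⟨d1, d2⟩ := int_div2 (n : ℤ)
    have hc := nat_cast_pred n
    have hr1 : (n:ℤ) * ((n:ℤ) + 1) = (n:ℤ) * (n:ℤ) + n := by ring
    have hr2 : (n:ℤ) * ((n:ℤ) - 1) = (n:ℤ) * (n:ℤ) - n := by ring
    have h1 : (n:ℤ) * ((n:ℤ) + 1) / 2 = ((n * (n - 1) / 2 + n : ℕ) : ℤ) := by omega
    have h2 : (n:ℤ) * ((n:ℤ) - 1) / 2 = ((n * (n - 1) / 2 : ℕ) : ℤ) := by omega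
    rw [h1, h2, zpow_natCast, zpow_natCast, pow_add, mul_pow]
    ring
  · have base := (summable_nat_add_iff (f := fun n : ℕ => (a*b) ^ (n * (n - 1) / 2) * b ^ n) 1).2
      (aux_nat (a*b) b hab)
    apply base.congr
    intro n
    obtain ⟨d1, d2⟩ := int_div2 (-((n:ℤ) + 1))
    have hc : (((n + 1) * ((n + 1) - 1) : ℕ) : ℤ) = ((n:ℤ) + 1) * (n:ℤ) := by
      simp only [Nat.succ_sub_one]; push_cast; ring
    have hr1 : (-((n:ℤ) + 1)) * ((-((n:ℤ) + 1)) + 1) = ((n:ℤ) + 1) * (n:ℤ) := by ring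
    have hr2 : (-((n:ℤ) + 1)) * ((-((n:ℤ) + 1)) - 1) = ((n:ℤ) + 1) * (n:ℤ) + 2 * ((n:ℤ) + 1) := by
      ring
    have h1 : (-((n:ℤ) + 1)) * ((-((n:ℤ) + 1)) + 1) / 2 =
        (((n + 1) * ((n + 1) - 1) / 2 : ℕ) : ℤ) := by omega
    have h2 : (-((n:ℤ) + 1)) * ((-((n:ℤ) + 1)) - 1) / 2 =
        (((n + 1) * ((n + 1) - 1) / 2 + (n + 1) : ℕ) : ℤ) := by omega
    rw [h1, h2, zpow_natCast, zpow_natCast, pow_add, mul_pow]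
    ring

theorem theta_even_part (a b : ℂ) (ha : a ≠ 0) (hb : b ≠ 0)
    (hab : ‖a * b‖ < 1) :
    ramanujanTheta (a ^ 3 * b) (a * b ^ 3) =
      (1 / 2) * (ramanujanTheta a b + ramanujanTheta (-a) (-b)) := by
  have hab' : ‖a * b‖ < 1 := hab
  set g : ℤ → ℂ := fun n => a ^ (n * (n + 1) / 2) * b ^ (n * (n - 1) / 2) with hg
  have hsum : Summable g := g_summable a b hab'
  have hsum2 : Summable (fun n : ℤ => (-1:ℂ) ^ n * g n) := by
    apply Summable.of_norm
    apply hsum.norm.congr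
    intro n
    simp [norm_mul, norm_zpow]
  have key : ∀ n : ℤ, (-1:ℂ) ^ (n * n) = (-1) ^ n := by
    intro n
    rcases Int.even_or_odd n with h | h
    · rw [(h.mul_right n).neg_one_zpow, h.neg_one_zpow]
    · rw [(h.mul h).neg_one_zpow, h.neg_one_zpow]
  have htheta_neg : ramanujanTheta (-a) (-b) = ∑' n : ℤ, (-1:ℂ) ^ n * g n := by
    unfold ramanujanTheta
    apply tsum_congr
    intro n
    have he : n * (n + 1) / 2 + n * (n - 1) / 2 = n * n := by
      obtain ⟨d1, d2⟩ := int_div2 n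
      have hr1 : n * (n + 1) = n * n + n := by ring
      have hr2 : n * (n - 1) = n * n - n := by ring
      omega
    rw [show (-a) = (-1) * a from by ring, show (-b) = (-1) * b from by ring,
      mul_zpow, mul_zpow]
    calc (-1:ℂ) ^ (n * (n + 1) / 2) * a ^ (n * (n + 1) / 2) *
          ((-1:ℂ) ^ (n * (n - 1) / 2) * b ^ (n * (n - 1) / 2))
        = ((-1:ℂ) ^ (n * (n + 1) / 2) * (-1:ℂ) ^ (n * (n - 1) / 2)) * g n := by rw [hg]; ring
      _ = (-1:ℂ) ^ n * g n := by
          rw [← zpow_add₀ (by norm_num : (-1:ℂ) ≠ 0), he, key]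
  set h : ℤ → ℂ := fun n => (1/2 : ℂ) * (g n + (-1:ℂ) ^ n * g n) with hh
  have hL : ramanujanTheta (a ^ 3 * b) (a * b ^ 3) = ∑' m : ℤ, g (2 * m) := by
    unfold ramanujanTheta
    apply tsum_congr
    intro m
    obtain ⟨d1, d2⟩ := int_div2 m
    have hr1 : m * (m + 1) = m * m + m := by ring
    have hr2 : m * (m - 1) = m * m - m := by ring
    have hr3 : m * (2 * m + 1) = 2 * (m * m) + m := by ring
    have hr4 : m * (2 * m - 1) = 2 * (m * m) - m := by ring
    have hr5 : 2 * m * (2 * m + 1) = 2 * (m * (2 * m + 1)) := by ring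
    have hr6 : 2 * m * (2 * m - 1) = 2 * (m * (2 * m - 1)) := by ring
    have e1 : 3 * (m * (m + 1) / 2) + m * (m - 1) / 2 = m * (2 * m + 1) := by omega
    have e2 : m * (m + 1) / 2 + 3 * (m * (m - 1) / 2) = m * (2 * m - 1) := by omega
    have e3 : 2 * m * (2 * m + 1) / 2 = m * (2 * m + 1) := by omega
    have e4 : 2 * m * (2 * m - 1) / 2 = m * (2 * m - 1) := by omega
    rw [mul_zpow, mul_zpow, show (a ^ 3) = a ^ (3:ℤ) from (zpow_natCast a 3).symm,
      show (b ^ 3) = b ^ (3:ℤ) from (zpow_natCast b 3).symm, ← zpow_mul, ← zpow_mul]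
    rw [hg]
    simp only
    rw [e3, e4, ← e1, ← e2, zpow_add₀ ha, zpow_add₀ hb, zpow_mul a 3, zpow_mul b 3]
    ring
  have hinj : Function.Injective (fun m : ℤ => 2 * m) := by
    intro x y hxy
    simpa using hxy
  have hvan : Function.support h ⊆ Set.range (fun m : ℤ => 2 * m) := by
    intro n hn
    rcases Int.even_or_odd n with ⟨k, hk⟩ | ho
    · exact ⟨k, show 2 * k = n by omega⟩
    · exact absurd (by rw [hh]; simp only; rw [ho.neg_one_zpow]; ring) hn
  have heven2 : ∀ m : ℤ, h (2 * m) = g (2 * m) := by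
    intro m
    rw [hh]
    simp only
    rw [Even.neg_one_zpow ⟨m, by ring⟩]
    ring
  calc ramanujanTheta (a ^ 3 * b) (a * b ^ 3)
      = ∑' m : ℤ, g (2 * m) := hL
    _ = ∑' m : ℤ, h (2 * m) := tsum_congr fun m => (heven2 m).symm
    _ = ∑' n : ℤ, h n := hinj.tsum_eq hvan
    _ = (1/2) * ∑' n : ℤ, (g n + (-1:ℂ) ^ n * g n) := tsum_mul_left
    _ = (1/2) * (∑' n : ℤ, g n + ∑' n : ℤ, (-1:ℂ) ^ n * g n) := by
        rw [Summable.tsum_add hsum hsum2]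
    _ = (1 / 2) * (ramanujanTheta a b + ramanujanTheta (-a) (-b)) := by
        rw [htheta_neg]; rfl
end

section
/- Let a, b be nonzero complex numbers with |ab| < 1. Then a · f(a⁵b³, a⁻¹b) = (1/2)·[f(a,b) − f(−a,−b)], where a⁻¹ denotes the inverse of the nonzero complex number a. -/
open Complex

private lemma two_mul_ediv (n : ℤ) : 2 * (n * (n + 1) / 2) = n * (n + 1) :=
  Int.mul_ediv_cancel' (Int.even_mul_succ_self n).two_dvd

private lemma two_mul_ediv' (n : ℤ) : 2 * (n * (n - 1) / 2) = n * (n - 1) := by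
  have h : n * (n - 1) = (n - 1) * ((n - 1) + 1) := by ring
  rw [h]; exact two_mul_ediv (n - 1)

private lemma summable_nat_aux {a b : ℂ} (ha : a ≠ 0) (hb : b ≠ 0)
    (hab : ‖a * b‖ < 1) :
    Summable (fun n : ℕ => a ^ ((n : ℤ) * ((n : ℤ) + 1) / 2) * b ^ ((n : ℤ) * ((n : ℤ) - 1) / 2)) := by
  apply summable_of_ratio_norm_eventually_le (r := 1/2) (by norm_num)
  have h0 : Filter.Tendsto (fun n : ℕ => ‖a‖ * ‖a * b‖ ^ n)
      Filter.atTop (nhds (‖a‖ * 0)) :=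
    (tendsto_pow_atTop_nhds_zero_of_lt_one (norm_nonneg _) hab).const_mul _
  rw [mul_zero] at h0
  filter_upwards [h0.eventually_lt_const (by norm_num : (0:ℝ) < 1/2)] with n hn
  have hE1 : ((n : ℤ) + 1) * (((n : ℤ) + 1) + 1) / 2 = (n : ℤ) * ((n : ℤ) + 1) / 2 + ((n : ℤ) + 1) := by
    have h1 := two_mul_ediv (n : ℤ)
    have h2 := two_mul_ediv ((n : ℤ) + 1)
    have h3 : ((n : ℤ) + 1) * (((n : ℤ) + 1) + 1) = (n : ℤ) * ((n : ℤ) + 1) + 2 * ((n : ℤ) + 1) := by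
      ring
    linarith
  have hE2 : ((n : ℤ) + 1) * (((n : ℤ) + 1) - 1) / 2 = (n : ℤ) * ((n : ℤ) - 1) / 2 + (n : ℤ) := by
    have h1 := two_mul_ediv' (n : ℤ)
    have h2 := two_mul_ediv' ((n : ℤ) + 1)
    have h3 : ((n : ℤ) + 1) * (((n : ℤ) + 1) - 1) = (n : ℤ) * ((n : ℤ) - 1) + 2 * (n : ℤ) := by
      ring
    linarith
  have key : a ^ (((n+1 : ℕ) : ℤ) * (((n+1 : ℕ) : ℤ) + 1) / 2) * b ^ (((n+1 : ℕ) : ℤ) * (((n+1 : ℕ) : ℤ) - 1) / 2)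
      = (a ^ ((n : ℤ) * ((n : ℤ) + 1) / 2) * b ^ ((n : ℤ) * ((n : ℤ) - 1) / 2)) * (a ^ ((n : ℤ) + 1) * b ^ (n : ℤ)) := by
    push_cast
    rw [hE1, hE2, zpow_add₀ ha, zpow_add₀ hb]
    ring
  simp only [key, norm_mul]
  have habs : ‖a ^ ((n : ℤ) + 1)‖ * ‖b ^ (n : ℤ)‖
      = ‖a‖ * ‖a * b‖ ^ n := by
    rw [norm_zpow, norm_zpow, norm_mul, zpow_add₀ (norm_ne_zero_iff.mpr ha),
      zpow_natCast, zpow_natCast, zpow_one, mul_pow]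
    ring
  rw [habs, mul_comm (1/2 : ℝ)]
  exact mul_le_mul_of_nonneg_left hn.le (by positivity)

private lemma summable_g {a b : ℂ} (ha : a ≠ 0) (hb : b ≠ 0)
    (hab : ‖a * b‖ < 1) :
    Summable (fun n : ℤ => a ^ (n * (n + 1) / 2) * b ^ (n * (n - 1) / 2)) := by
  apply Summable.of_nat_of_neg
  · exact summable_nat_aux ha hb hab
  · apply (summable_nat_aux hb ha (by rwa [mul_comm])).congr
    intro n
    have e1 : (-(n : ℤ)) * (-(n : ℤ) + 1) / 2 = (n : ℤ) * ((n : ℤ) - 1) / 2 := by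
      rw [show (-(n : ℤ)) * (-(n : ℤ) + 1) = (n : ℤ) * ((n : ℤ) - 1) by ring]
    have e2 : (-(n : ℤ)) * (-(n : ℤ) - 1) / 2 = (n : ℤ) * ((n : ℤ) + 1) / 2 := by
      rw [show (-(n : ℤ)) * (-(n : ℤ) - 1) = (n : ℤ) * ((n : ℤ) + 1) by ring]
    simp only [e1, e2]
    ring

theorem theta_odd_part (a b : ℂ) (ha : a ≠ 0) (hb : b ≠ 0)
    (hab : ‖a * b‖ < 1) :
    a * ramanujanTheta (a ^ 5 * b ^ 3) (a⁻¹ * b) =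
      (1 / 2) * (ramanujanTheta a b - ramanujanTheta (-a) (-b)) := by
  set g : ℤ → ℂ := fun n => a ^ (n * (n + 1) / 2) * b ^ (n * (n - 1) / 2) with hg
  set gm : ℤ → ℂ := fun n => (-a) ^ (n * (n + 1) / 2) * (-b) ^ (n * (n - 1) / 2) with hgm
  set F : ℤ → ℂ := fun n => if Odd n then g n else 0 with hF
  have Sg : Summable g := summable_g ha hb hab
  have Sgm : Summable gm := summable_g (neg_ne_zero.2 ha) (neg_ne_zero.2 hb)
    (by rwa [neg_mul_neg])
  -- pointwise identity
  have hFs : ∀ n : ℤ, (1/2 : ℂ) * (g n - gm n) = F n := by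
    intro n
    have hpq : n * (n + 1) / 2 + n * (n - 1) / 2 = n * n := by
      have h1 := two_mul_ediv n
      have h2 := two_mul_ediv' n
      have h3 : n * (n + 1) + n * (n - 1) = 2 * (n * n) := by ring
      linarith
    have hgm' : gm n = (-1 : ℂ) ^ (n * n) * g n := by
      simp only [hgm, hg]
      rw [show (-a) = (-1 : ℂ) * a from (neg_one_mul a).symm,
        show (-b) = (-1 : ℂ) * b from (neg_one_mul b).symm, mul_zpow, mul_zpow,
        ← hpq, zpow_add₀ (by norm_num : (-1 : ℂ) ≠ 0)]
      ring
    rcases Int.even_or_odd n with he | ho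
    · have : (-1 : ℂ) ^ (n * n) = 1 := (he.mul_right n).neg_one_zpow
      simp only [hF, hgm', this, one_mul, sub_self, mul_zero]
      rw [if_neg (by simpa using Int.not_odd_iff_even.mpr he)]
    · have : (-1 : ℂ) ^ (n * n) = -1 := (ho.mul ho).neg_one_zpow
      simp only [hF]
      rw [if_pos ho, hgm', this]
      ring
  have h1 : HasSum (fun n => (1/2 : ℂ) * (g n - gm n)) ((1/2) * (∑' n, g n - ∑' n, gm n)) :=
    (Sg.hasSum.sub Sgm.hasSum).mul_left _
  have hFsum : HasSum F ((1/2) * (∑' n, g n - ∑' n, gm n)) := by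
    rwa [funext hFs] at h1
  have inj : Function.Injective (fun m : ℤ => 2 * m + 1) := by
    intro x y h
    simpa using h
  have hrange : ∀ x ∉ Set.range (fun m : ℤ => 2 * m + 1), F x = 0 := by
    intro x hx
    rw [hF]
    refine if_neg ?_
    rintro ⟨m, hm⟩
    exact hx ⟨m, hm.symm⟩
  have hcompsum : HasSum (F ∘ (fun m : ℤ => 2 * m + 1)) ((1/2) * (∑' n, g n - ∑' n, gm n)) :=
    (inj.hasSum_iff hrange).2 hFsum
  have hcomp : ∀ m : ℤ, (F ∘ (fun m : ℤ => 2 * m + 1)) m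
      = a * ((a ^ 5 * b ^ 3) ^ (m * (m + 1) / 2) * (a⁻¹ * b) ^ (m * (m - 1) / 2)) := by
    intro m
    have hodd : Odd (2 * m + 1) := ⟨m, rfl⟩
    simp only [Function.comp, hF, hg, if_pos hodd]
    have hp := two_mul_ediv m
    have hq := two_mul_ediv' m
    set p := m * (m + 1) / 2 with hpdef
    set q := m * (m - 1) / 2 with hqdef
    have hE1 : (2 * m + 1) * (2 * m + 1 + 1) / 2 = 1 + 5 * p + -q := by
      have h : (2 * m + 1) * (2 * m + 1 + 1) = 2 * (1 + 5 * p + -q) := by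
        have : 2 * (1 + 5 * p + -q) = 2 + 5 * (2 * p) - (2 * q) := by ring
        rw [this, hp, hq]; ring
      rw [h, Int.mul_ediv_cancel_left _ two_ne_zero]
    have hE2 : (2 * m + 1) * (2 * m + 1 - 1) / 2 = 3 * p + q := by
      have h : (2 * m + 1) * (2 * m + 1 - 1) = 2 * (3 * p + q) := by
        have : 2 * (3 * p + q) = 3 * (2 * p) + (2 * q) := by ring
        rw [this, hp, hq]; ring
      rw [h, Int.mul_ediv_cancel_left _ two_ne_zero]
    rw [hE1, hE2]
    rw [mul_zpow, mul_zpow, inv_zpow, ← zpow_neg, ← zpow_natCast a 5, ← zpow_natCast b 3,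
      ← zpow_mul, ← zpow_mul, zpow_add₀ ha, zpow_add₀ ha, zpow_add₀ hb, zpow_one]
    push_cast
    ring
  have hL : HasSum (fun m : ℤ => a * ((a ^ 5 * b ^ 3) ^ (m * (m + 1) / 2) * (a⁻¹ * b) ^ (m * (m - 1) / 2)))
      ((1/2) * (∑' n, g n - ∑' n, gm n)) := by
    rwa [funext hcomp] at hcompsum
  have hLt := hL.tsum_eq
  rw [tsum_mul_left] at hLt
  rw [ramanujanTheta, ramanujanTheta, ramanujanTheta]
  exact hLt
end

section
/- Let q be a nonzero complex number with |q| < 1. Then f(q⁴, q⁴) = (1/2)·[f(q,q) + f(−q,−q)] and q · f(q⁸, 1) = (1/2)·[f(q,q) − f(−q,−q)]. -/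
open Function

lemma hasSum_even_add_odd_int {f : ℤ → ℂ} {m m' : ℂ}
    (he : HasSum (fun k : ℤ ↦ f (2 * k)) m)
    (ho : HasSum (fun k : ℤ ↦ f (2 * k + 1)) m') : HasSum f (m + m') := by
  have hi : Function.Injective (fun k : ℤ => 2 * k) := fun a b h => by dsimp at h; omega
  have hi' : Function.Injective (fun k : ℤ => 2 * k + 1) := fun a b h => by dsimp at h; omega
  refine (hi.hasSum_range_iff.2 he).add_isCompl ?_ (hi'.hasSum_range_iff.2 ho)
  convert Int.isCompl_even_odd using 2
  · rfl
  · ext n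
    simp only [Set.mem_range, Set.mem_setOf_eq, even_iff_exists_two_mul, eq_comm]
  · ext n
    simp only [Set.mem_range, Set.mem_setOf_eq, Int.odd_iff]
    constructor
    · rintro ⟨k, rfl⟩; omega
    · intro h; exact ⟨n / 2, by omega⟩

lemma summable_sq {c : ℂ} (hc : ‖c‖ < 1) :
    Summable (fun n : ℤ => c ^ ((n ^ 2 : ℤ))) := by
  have hnat : Summable (fun n : ℕ => c ^ (n ^ 2)) := by
    apply Summable.of_norm
    refine Summable.of_nonneg_of_le (fun n => norm_nonneg _) (fun n => ?_)
      (summable_geometric_of_lt_one (norm_nonneg c) hc)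
    rw [norm_pow]
    exact pow_le_pow_of_le_one (norm_nonneg c) hc.le (Nat.le_self_pow two_ne_zero n)
  have key : ∀ n : ℤ, c ^ ((n ^ 2 : ℤ)) = c ^ (n.natAbs ^ 2) := by
    intro n
    rw [← zpow_natCast]
    congr 1
    push_cast
    exact (sq_abs n).symm
  apply Summable.of_nat_of_neg
  · exact hnat.congr fun n => by rw [key]; simp
  · exact hnat.congr fun n => by rw [key]; simp

theorem theta_even_odd_q (q : ℂ) (hq : q ≠ 0) (hq1 : ‖q‖ < 1) :
    ramanujanTheta (q ^ 4) (q ^ 4) =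
        (1 / 2) * (ramanujanTheta q q + ramanujanTheta (-q) (-q)) ∧
      q * ramanujanTheta (q ^ 8) 1 =
        (1 / 2) * (ramanujanTheta q q - ramanujanTheta (-q) (-q)) := by
  -- simplify theta c c
  have key : ∀ c : ℂ, c ≠ 0 → ramanujanTheta c c = ∑' n : ℤ, c ^ ((n ^ 2 : ℤ)) := by
    intro c hc
    unfold ramanujanTheta
    congr 1; funext n
    rw [← zpow_add₀ hc]
    congr 1
    obtain ⟨k, hk⟩ := Int.even_mul_succ_self n
    have h1 : n * (n + 1) = n ^ 2 + n := by ring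
    have h2 : n * (n - 1) = n ^ 2 - n := by ring
    rw [h1, h2]; rw [h1] at hk; omega
  -- `F n = q ^ (n^2)`
  set F : ℤ → ℂ := fun n => q ^ ((n ^ 2 : ℤ)) with hF
  set G : ℤ → ℂ := fun n => (-q) ^ ((n ^ 2 : ℤ)) with hG
  have hqn : (-q) ≠ 0 := neg_ne_zero.2 hq
  have hsF : Summable F := summable_sq hq1
  have hsG : Summable G := summable_sq (by simpa using hq1)
  set E : ℂ := ∑' k : ℤ, F (2 * k) with hE
  set O : ℂ := ∑' k : ℤ, F (2 * k + 1) with hO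
  have hiE : Function.Injective (fun k : ℤ => 2 * k) := fun a b h => by dsimp at h; omega
  have hiO : Function.Injective (fun k : ℤ => 2 * k + 1) := fun a b h => by dsimp at h; omega
  have hsE : HasSum (fun k : ℤ => F (2 * k)) E := (hsF.comp_injective hiE).hasSum
  have hsO : HasSum (fun k : ℤ => F (2 * k + 1)) O := (hsF.comp_injective hiO).hasSum
  have hFsum : ∑' n : ℤ, F n = E + O := (hasSum_even_add_odd_int hsE hsO).tsum_eq
  -- G on evens = F, on odds = -F
  have hGe : ∀ k : ℤ, G (2 * k) = F (2 * k) := by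
    intro k
    show (-q) ^ (((2 * k) ^ 2 : ℤ)) = q ^ (((2 * k) ^ 2 : ℤ))
    rw [show ((-q) : ℂ) = (-1) * q by ring, mul_zpow,
      Even.neg_one_zpow ⟨2 * k ^ 2, by ring⟩, one_mul]
  have hGo : ∀ k : ℤ, G (2 * k + 1) = -F (2 * k + 1) := by
    intro k
    show (-q) ^ (((2 * k + 1) ^ 2 : ℤ)) = -(q ^ (((2 * k + 1) ^ 2 : ℤ)))
    rw [show ((-q) : ℂ) = (-1) * q by ring, mul_zpow,
      Odd.neg_one_zpow ⟨2 * k ^ 2 + 2 * k, by ring⟩]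
    ring
  have hGsum : ∑' n : ℤ, G n = E + -O := by
    refine (hasSum_even_add_odd_int ?_ ?_).tsum_eq
    · exact hsE.congr_fun fun k => hGe k
    · exact hsO.neg.congr_fun fun k => hGo k
  -- evaluate theta (q^4) (q^4)
  have h4 : ramanujanTheta (q ^ 4) (q ^ 4) = E := by
    rw [key (q ^ 4) (pow_ne_zero 4 hq), hE]
    congr 1; funext n
    show (q ^ 4) ^ ((n ^ 2 : ℤ)) = q ^ (((2 * n) ^ 2 : ℤ))
    rw [← zpow_natCast q 4, ← zpow_mul]
    congr 1; ring
  -- evaluate q * theta (q^8) 1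
  have h8 : q * ramanujanTheta (q ^ 8) 1 = O := by
    unfold ramanujanTheta
    rw [← tsum_mul_left, hO]
    congr 1; funext n
    rw [one_zpow, mul_one]
    show q * (q ^ 8) ^ ((n * (n + 1) / 2 : ℤ)) = q ^ (((2 * n + 1) ^ 2 : ℤ))
    rw [← zpow_natCast q 8, ← zpow_mul, ← zpow_one_add₀ hq]
    congr 1
    obtain ⟨k, hk⟩ := Int.even_mul_succ_self n
    have h1 : n * (n + 1) = n ^ 2 + n := by ring
    have h2 : (2 * n + 1) ^ 2 = 4 * n ^ 2 + 4 * n + 1 := by ring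
    rw [h2]; rw [h1] at hk ⊢; push_cast; omega
  rw [h4, h8, key q hq, key (-q) hqn, ← hF, ← hG, hFsum, hGsum]
  constructor <;> ring
end

section
/- Let ω be a primitive cube root of unity in ℂ and let a, b be nonzero complex numbers with |ab| < 1. Then f(ωa, ωb) = ω·f(a,b) + (1 − ω)·f(a⁶b³, a³b⁶). -/
open Filter

private lemma theta_nat_summable (a b : ℂ) (ha : a ≠ 0) (hb : b ≠ 0)
    (hab : ‖a * b‖ < 1) :
    Summable (fun n : ℕ => ‖a ^ ((n : ℤ) * ((n : ℤ) + 1) / 2) * b ^ ((n : ℤ) * ((n : ℤ) - 1) / 2)‖) := by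
  apply summable_of_ratio_norm_eventually_le (r := 1/2) (by norm_num)
  have h0 : Tendsto (fun n : ℕ => (‖a‖ * ‖b‖) ^ n * ‖a‖)
      atTop (nhds 0) := by
    have := (tendsto_pow_atTop_nhds_zero_of_lt_one
      (mul_nonneg (norm_nonneg a) (norm_nonneg b))
      (by rwa [norm_mul] at hab)).mul_const ‖a‖
    simpa using this
  filter_upwards [h0.eventually (ge_mem_nhds (by norm_num : (0:ℝ) < 1/2))] with n hn
  simp only [norm_norm]
  have hna : ‖a‖ ≠ 0 := by simpa using ha
  have hnb : ‖b‖ ≠ 0 := by simpa using hb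
  have e1 : ((n + 1 : ℕ) : ℤ) * (((n + 1 : ℕ) : ℤ) + 1) / 2
      = ((n : ℤ) + 1) + (n : ℤ) * ((n : ℤ) + 1) / 2 := by
    push_cast
    have h1 : ((n:ℤ)+1)*((n:ℤ)+1+1) = (n:ℤ)*((n:ℤ)+1) + ((n:ℤ)+1)*2 := by ring
    have h2 : (2:ℤ) ∣ (n:ℤ)*((n:ℤ)+1) := (Int.even_mul_succ_self (n:ℤ)).two_dvd
    omega
  have e2 : ((n + 1 : ℕ) : ℤ) * (((n + 1 : ℕ) : ℤ) - 1) / 2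
      = (n : ℤ) + (n : ℤ) * ((n : ℤ) - 1) / 2 := by
    push_cast
    have h1 : ((n:ℤ)+1)*((n:ℤ)+1-1) = (n:ℤ)*((n:ℤ)-1) + (n:ℤ)*2 := by ring
    have h2 : Even ((n:ℤ)*((n:ℤ)-1)) := Int.even_mul_pred_self (n:ℤ)
    have h2' : (2:ℤ) ∣ (n:ℤ)*((n:ℤ)-1) := h2.two_dvd
    omega
  rw [norm_mul, norm_mul, norm_zpow, norm_zpow, norm_zpow, norm_zpow, e1, e2,
    zpow_add₀ hna, zpow_add₀ hnb]
  have key : ‖a‖ ^ ((n:ℤ)+1) * ‖b‖ ^ (n:ℤ) = (‖a‖ * ‖b‖) ^ n * ‖a‖ := by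
    rw [zpow_add₀ hna, zpow_one, zpow_natCast, zpow_natCast, mul_pow]
    ring
  calc ‖a‖ ^ ((n:ℤ)+1) * ‖a‖ ^ ((n:ℤ)*((n:ℤ)+1)/2) * (‖b‖ ^ (n:ℤ) * ‖b‖ ^ ((n:ℤ)*((n:ℤ)-1)/2))
      = (‖a‖ ^ ((n:ℤ)+1) * ‖b‖ ^ (n:ℤ)) * (‖a‖ ^ ((n:ℤ)*((n:ℤ)+1)/2) * ‖b‖ ^ ((n:ℤ)*((n:ℤ)-1)/2)) := by
        ring
    _ ≤ (1/2) * (‖a‖ ^ ((n:ℤ)*((n:ℤ)+1)/2) * ‖b‖ ^ ((n:ℤ)*((n:ℤ)-1)/2)) := by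
        apply mul_le_mul_of_nonneg_right _ (by positivity)
        rw [key]; exact hn

private lemma theta_summable (a b : ℂ) (ha : a ≠ 0) (hb : b ≠ 0)
    (hab : ‖a * b‖ < 1) :
    Summable (fun n : ℤ => ‖a ^ (n * (n + 1) / 2) * b ^ (n * (n - 1) / 2)‖) := by
  apply Summable.of_nat_of_neg_add_one
  · exact theta_nat_summable a b ha hb hab
  · have hab' : ‖b * a‖ < 1 := by rwa [mul_comm]
    have h := (summable_nat_add_iff 1).2 (theta_nat_summable b a hb ha hab')
    refine h.congr fun n => ?_
    apply congrArg Norm.norm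
    have e1 : (-((n:ℤ) + 1)) * (-((n:ℤ) + 1) + 1) / 2
        = ((n + 1 : ℕ) : ℤ) * (((n + 1 : ℕ) : ℤ) - 1) / 2 := by
      push_cast
      have h1 : (-((n:ℤ) + 1)) * (-((n:ℤ) + 1) + 1) = ((n:ℤ)+1) * (((n:ℤ)+1) - 1) := by ring
      rw [h1]
    have e2 : (-((n:ℤ) + 1)) * (-((n:ℤ) + 1) - 1) / 2
        = ((n + 1 : ℕ) : ℤ) * (((n + 1 : ℕ) : ℤ) + 1) / 2 := by
      push_cast
      have h1 : (-((n:ℤ) + 1)) * (-((n:ℤ) + 1) - 1) = ((n:ℤ)+1) * (((n:ℤ)+1) + 1) := by ring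
      rw [h1]
    push_cast
    rw [e1, e2]
    push_cast
    ring

theorem theta_cubic_transform (ω a b : ℂ) (hω : IsPrimitiveRoot ω 3)
    (ha : a ≠ 0) (hb : b ≠ 0) (hab : ‖a * b‖ < 1) :
    ramanujanTheta (ω * a) (ω * b) =
      ω * ramanujanTheta a b + (1 - ω) * ramanujanTheta (a ^ 6 * b ^ 3) (a ^ 3 * b ^ 6) := by
  have hω3 : ω ^ (3:ℕ) = 1 := hω.pow_eq_one
  have hω0 : ω ≠ 0 := fun h => by simp [h] at hω3
  have hω3' : ω ^ (3:ℤ) = 1 := by rw [← zpow_natCast] at hω3; exact_mod_cast hω3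
  set t : ℤ → ℂ := fun n => a ^ (n * (n + 1) / 2) * b ^ (n * (n - 1) / 2) with ht
  have hnormsum : Summable (fun n : ℤ => ‖t n‖) := by
    simp only [ht]; exact theta_summable a b ha hb hab
  have hsum : Summable t := hnormsum.of_norm
  set c : ℤ → ℂ := fun n => if (3:ℤ) ∣ n then (1 - ω) * t n else 0 with hcdef
  have hcsum : Summable c := by
    refine Summable.of_norm_bounded (g := fun n : ℤ => ‖1 - ω‖ * ‖t n‖) (hnormsum.mul_left ‖1 - ω‖) fun n => ?_
    simp only [hcdef]
    split
    · simp [norm_mul]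
    · simpa using mul_nonneg (norm_nonneg (1 - ω)) (norm_nonneg (t n))
  -- pointwise identity
  have key : ∀ n : ℤ, (ω * a) ^ (n * (n + 1) / 2) * (ω * b) ^ (n * (n - 1) / 2)
      = ω * t n + c n := by
    intro n
    have hesum : n * (n + 1) / 2 + n * (n - 1) / 2 = n * n := by
      have h1 : n*(n+1) = n*n + n := by ring
      have h2 : n*(n-1) = n*n - n := by ring
      have h3 : (2:ℤ) ∣ n*(n+1) := (Int.even_mul_succ_self n).two_dvd
      omega
    have lhs_eq : (ω * a) ^ (n * (n + 1) / 2) * (ω * b) ^ (n * (n - 1) / 2)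
        = ω ^ (n * n) * t n := by
      rw [mul_zpow, mul_zpow, ht]
      rw [← hesum, zpow_add₀ hω0]
      ring
    rw [lhs_eq]
    by_cases h3 : (3:ℤ) ∣ n
    · obtain ⟨m, rfl⟩ := h3
      have : (3*m) * (3*m) = 3 * (3*(m*m)) := by ring
      rw [this, zpow_mul, hω3', one_zpow, hcdef]
      simp only [if_pos (Dvd.intro m rfl)]
      ring
    · have hr : ∃ m : ℤ, n * n = 3 * m + 1 := by
        have h4 : n % 3 = 1 ∨ n % 3 = 2 := by omega
        obtain ⟨q, hq⟩ : ∃ q, n = 3*q + 1 ∨ n = 3*q + 2 := ⟨n / 3, by omega⟩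
        rcases hq with hq | hq
        · exact ⟨3*q*q + 2*q, by rw [hq]; ring⟩
        · exact ⟨3*q*q + 4*q + 1, by rw [hq]; ring⟩
      obtain ⟨m, hm⟩ := hr
      rw [hm, zpow_add₀ hω0, zpow_mul, hω3', one_zpow, zpow_one, hcdef]
      simp only [if_neg h3]
      ring
  -- relate s to t
  have hst : ∀ m : ℤ, (a ^ 6 * b ^ 3) ^ (m * (m + 1) / 2) * (a ^ 3 * b ^ 6) ^ (m * (m - 1) / 2)
      = t (3 * m) := by
    intro m
    set e1 := m * (m + 1) / 2
    set e2 := m * (m - 1) / 2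
    have hA : (a ^ 6 * b ^ 3 : ℂ) ^ e1 = a ^ (6 * e1) * b ^ (3 * e1) := by
      rw [mul_zpow, ← zpow_natCast a 6, ← zpow_natCast b 3, ← zpow_mul, ← zpow_mul]
      norm_num
    have hB : (a ^ 3 * b ^ 6 : ℂ) ^ e2 = a ^ (3 * e2) * b ^ (6 * e2) := by
      rw [mul_zpow, ← zpow_natCast a 3, ← zpow_natCast b 6, ← zpow_mul, ← zpow_mul]
      norm_num
    rw [hA, hB]
    show a ^ (6 * e1) * b ^ (3 * e1) * (a ^ (3 * e2) * b ^ (6 * e2))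
        = a ^ ((3*m) * (3*m + 1) / 2) * b ^ ((3*m) * (3*m - 1) / 2)
    have expa : 6 * e1 + 3 * e2 = (3*m) * (3*m + 1) / 2 := by
      simp only [e1, e2]
      have h1 : (3*m) * (3*m + 1) = 6 * (m*(m+1)) + 3 * (m*(m-1)) := by ring
      have h2 : (2:ℤ) ∣ m*(m+1) := (Int.even_mul_succ_self m).two_dvd
      have h3 : (2:ℤ) ∣ m*(m-1) := (Int.even_mul_pred_self m).two_dvd
      omega
    have expb : 3 * e1 + 6 * e2 = (3*m) * (3*m - 1) / 2 := by
      simp only [e1, e2]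
      have h1 : (3*m) * (3*m - 1) = 3 * (m*(m+1)) + 6 * (m*(m-1)) := by ring
      have h2 : (2:ℤ) ∣ m*(m+1) := (Int.even_mul_succ_self m).two_dvd
      have h3 : (2:ℤ) ∣ m*(m-1) := (Int.even_mul_pred_self m).two_dvd
      omega
    rw [← expa, ← expb, zpow_add₀ ha, zpow_add₀ hb]
    ring
  -- sum over multiples of 3
  have hinj : Function.Injective (fun m : ℤ => 3 * m) := fun x y h => by
    simpa using h
  have hcsum_eq : ∑' n : ℤ, c n = (1 - ω) * ∑' m : ℤ, t (3 * m) := by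
    rw [← hinj.tsum_eq (f := c) ?_]
    · simp only [hcdef]
      have : ∀ m : ℤ, (if (3:ℤ) ∣ 3 * m then (1-ω) * t (3*m) else 0) = (1-ω) * t (3*m) :=
        fun m => if_pos ⟨m, rfl⟩
      rw [tsum_congr this, tsum_mul_left]
    · intro n hn
      simp only [hcdef, Function.mem_support] at hn
      by_contra hmem
      apply hn
      rw [if_neg]
      rintro ⟨m, rfl⟩
      exact hmem ⟨m, rfl⟩
  have h1 : ramanujanTheta (ω * a) (ω * b)
      = ∑' n : ℤ, (ω * a) ^ (n * (n + 1) / 2) * (ω * b) ^ (n * (n - 1) / 2) := rfl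
  have h2 : ramanujanTheta a b = ∑' n : ℤ, t n := rfl
  have h3 : ramanujanTheta (a ^ 6 * b ^ 3) (a ^ 3 * b ^ 6) = ∑' m : ℤ, t (3 * m) := by
    have h4 : ramanujanTheta (a ^ 6 * b ^ 3) (a ^ 3 * b ^ 6)
        = ∑' m : ℤ, (a ^ 6 * b ^ 3) ^ (m * (m + 1) / 2) * (a ^ 3 * b ^ 6) ^ (m * (m - 1) / 2) := rfl
    rw [h4]
    exact tsum_congr hst
  rw [h1, h2, h3, tsum_congr key, Summable.tsum_add (hsum.mul_left ω) hcsum, tsum_mul_left, hcsum_eq]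
end

section
/- Let a, b be nonzero complex numbers with |ab| < 1 and let i denote the imaginary unit. Then f(ia, ib) = (1/2)·(1 + i)·f(a,b) + (1/2)·(1 − i)·f(−a,−b). -/
theorem theta_quartic_compact (a b : ℂ) (ha : a ≠ 0) (hb : b ≠ 0)
    (hab : ‖a * b‖ < 1) :
    ramanujanTheta (Complex.I * a) (Complex.I * b) =
      (1 / 2) * (1 + Complex.I) * ramanujanTheta a b +
        (1 / 2) * (1 - Complex.I) * ramanujanTheta (-a) (-b) := by
  have hI : Complex.I ≠ 0 := Complex.I_ne_zero
  set c1 : ℂ := (1/2) * (1 + Complex.I) with hc1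
  set c2 : ℂ := (1/2) * (1 - Complex.I) with hc2
  set f : ℤ → ℂ := fun n => a ^ (n * (n + 1) / 2) * b ^ (n * (n - 1) / 2) with hf
  set g : ℤ → ℂ := fun n => (-a) ^ (n * (n + 1) / 2) * (-b) ^ (n * (n - 1) / 2) with hg
  set h : ℤ → ℂ := fun n =>
    (Complex.I * a) ^ (n * (n + 1) / 2) * (Complex.I * b) ^ (n * (n - 1) / 2) with hh
  have key : ∀ n : ℤ, h n = c1 * f n + c2 * g n := by
    intro n
    have hk2 : (n * (n + 1) / 2) * 2 = n * (n + 1) :=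
      Int.ediv_mul_cancel (Int.even_mul_succ_self n).two_dvd
    have hm2 : (n * (n - 1) / 2) * 2 = n * (n - 1) := by
      refine Int.ediv_mul_cancel ?_
      rcases Int.even_or_odd n with ⟨t, ht⟩ | ⟨t, ht⟩
      · exact ⟨t * (n - 1), by rw [ht]; ring⟩
      · exact ⟨n * t, by rw [ht]; ring⟩
    have hsum : n * (n + 1) / 2 + n * (n - 1) / 2 = n * n := by
      have hkm : n * (n + 1) + n * (n - 1) = 2 * (n * n) := by ring
      omega
    have expand : ∀ c : ℂ, c ≠ 0 →
        (c * a) ^ (n * (n + 1) / 2) * (c * b) ^ (n * (n - 1) / 2)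
          = c ^ (n * n) * f n := by
      intro c hc
      rw [mul_zpow, mul_zpow, ← hsum, zpow_add₀ hc, hf]
      ring
    have hga : g n = (-1 : ℂ) ^ (n * n) * f n := by
      have : g n = ((-1 : ℂ) * a) ^ (n * (n + 1) / 2) * ((-1 : ℂ) * b) ^ (n * (n - 1) / 2) := by
        simp [hg]
      rw [this, expand (-1) (by norm_num)]
    have hha : h n = Complex.I ^ (n * n) * f n := expand Complex.I hI
    have h4 : ∀ c : ℂ, c ^ (4 : ℤ) = 1 → ∀ s : ℤ, c ^ (4 * s) = 1 := by
      intro c hc s; rw [zpow_mul, hc, one_zpow]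
    have hI4 : Complex.I ^ (4 : ℤ) = 1 := by
      rw [show (4 : ℤ) = ((4 : ℕ) : ℤ) from rfl, zpow_natCast]
      simp [pow_succ, Complex.I_mul_I]
    have hm4 : (-1 : ℂ) ^ (4 : ℤ) = 1 := by
      rw [show (4 : ℤ) = ((4 : ℕ) : ℤ) from rfl, zpow_natCast]; norm_num
    have hcoef : Complex.I ^ (n * n) = c1 + c2 * (-1 : ℂ) ^ (n * n) := by
      rcases Int.even_or_odd n with ⟨t, ht⟩ | ⟨t, ht⟩
      · have hnn : n * n = 4 * (t * t) := by rw [ht]; ring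
        rw [hnn, h4 _ hI4, h4 _ hm4, hc1, hc2]; ring
      · have hnn : n * n = 4 * (t * t + t) + 1 := by rw [ht]; ring
        rw [hnn, zpow_add₀ hI, zpow_add₀ (by norm_num : (-1 : ℂ) ≠ 0),
          h4 _ hI4, h4 _ hm4, zpow_one, zpow_one, hc1, hc2]
        ring
    rw [hha, hga, hcoef]; ring
  have hnormg : ∀ n : ℤ, ‖g n‖ = ‖f n‖ := by
    intro n; simp [hf, hg, norm_zpow]
  have hnormh : ∀ n : ℤ, ‖h n‖ = ‖f n‖ := by
    intro n; simp [hf, hh, norm_zpow, mul_zpow, Complex.norm_I]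
  show ∑' n, h n = c1 * ∑' n, f n + c2 * ∑' n, g n
  by_cases hS : Summable f
  · have hSg : Summable g := by
      rw [← summable_norm_iff] at hS ⊢
      simpa [hnormg] using hS
    calc ∑' n, h n = ∑' n, (c1 * f n + c2 * g n) := tsum_congr key
      _ = ∑' n, c1 * f n + ∑' n, c2 * g n := Summable.tsum_add (hS.mul_left c1) (hSg.mul_left c2)
      _ = c1 * ∑' n, f n + c2 * ∑' n, g n := by rw [tsum_mul_left, tsum_mul_left]
  · have hSg : ¬ Summable g := by
      intro hc; apply hS
      rw [← summable_norm_iff] at hc ⊢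
      simpa [hnormg] using hc
    have hSh : ¬ Summable h := by
      intro hc; apply hS
      rw [← summable_norm_iff] at hc ⊢
      simpa [hnormh] using hc
    rw [tsum_eq_zero_of_not_summable hS, tsum_eq_zero_of_not_summable hSg,
      tsum_eq_zero_of_not_summable hSh]
    ring
end
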